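/- If a binary infinite word w does not have letter frequencies (i.e., lim_{n→∞}|pref_n(w)|₀/n does not exist), then w is weakly abelian periodic. Moreover, w is WAP with any rational frequency ρ strictly between the liminf r and limsup R of the sequence (|pref_n(w)|₀/n). -/

import Mathlib

open Filter Topology

/-- Number of 1's (`true`) in the length-`n` prefix of the infinite binary word `w`. -/
def ones (w : ℕ → Bool) (n : ℕ) : ℕ :=
  ((Finset.range n).filter (fun i => w i = true)).card

/-- Number of 0's (`false`) in the length-`n` prefix of `w`. -/
def zeros (w : ℕ → Bool) (n : ℕ) : ℕ := n - ones w n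

/-- The graphic of `w`: `g_w(n) = |pref_n(w)|₁ - |pref_n(w)|₀`. -/
def graphic (w : ℕ → Bool) (n : ℕ) : ℤ := (ones w n : ℤ) - (zeros w n : ℤ)

/-- `w` is weakly abelian periodic with frequency `ρ` of the letter 1 in the blocks:
there is a factorization `w = v₀v₁v₂⋯` (cut points `k 0 < k 1 < ⋯`, with `v₀` the
prefix of length `k 0`) such that each block `vᵢ = w[k i, k (i+1))`, `i ≥ 1`,
has frequency `ρ` of the letter 1. -/
def WAPwith (w : ℕ → Bool) (ρ : ℚ) : Prop :=
  ∃ k : ℕ → ℕ, StrictMono k ∧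
    ∀ i : ℕ, ((ones w (k (i+1)) : ℚ) - (ones w (k i) : ℚ))
      = ρ * ((k (i+1) : ℚ) - (k i : ℚ))

/-- `w` is weakly abelian periodic. -/
def WAP (w : ℕ → Bool) : Prop := ∃ ρ : ℚ, WAPwith w ρ

/-- `w` is bounded weakly abelian periodic: WAP with blocks of uniformly bounded length. -/
def BoundedWAP (w : ℕ → Bool) : Prop :=
  ∃ (ρ : ℚ) (k : ℕ → ℕ) (C : ℕ), StrictMono k ∧ (∀ i, k (i+1) - k i ≤ C) ∧
    ∀ i : ℕ, ((ones w (k (i+1)) : ℚ) - (ones w (k i) : ℚ))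
      = ρ * ((k (i+1) : ℚ) - (k i : ℚ))

/-- `w` has bounded width: its graphic lies between two parallel lines with
rational coefficients. -/
def BoundedWidth (w : ℕ → Bool) : Prop :=
  ∃ a b₁ b₂ : ℚ, ∀ n : ℕ,
    a * n + b₁ ≤ (graphic w n : ℚ) ∧ (graphic w n : ℚ) ≤ a * n + b₂

/-- `w` is WAP with frequency `ρ` of the letter 0 in the blocks. -/
def WAPwithZero (w : ℕ → Bool) (ρ : ℚ) : Prop :=
  ∃ k : ℕ → ℕ, StrictMono k ∧
    ∀ i : ℕ, ((zeros w (k (i+1)) : ℚ) - (zeros w (k i) : ℚ))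
      = ρ * ((k (i+1) : ℚ) - (k i : ℚ))

lemma ones_le_aux (w : ℕ → Bool) (n : ℕ) : ones w n ≤ n := by
  simpa [ones] using Finset.card_filter_le (Finset.range n) (fun i => w i = true)

lemma zeros_cast_aux (w : ℕ → Bool) (n : ℕ) : (zeros w n : ℤ) = (n : ℤ) - ones w n := by
  have := ones_le_aux w n
  simp only [zeros]
  omega

lemma zeros_succ_le_aux (w : ℕ → Bool) (n : ℕ) : zeros w (n + 1) ≤ zeros w n + 1 := by
  have h1 : ones w n ≤ ones w (n + 1) := by
    apply Finset.card_le_card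
    exact Finset.filter_subset_filter _ (Finset.range_subset_range.2 (Nat.le_succ n))
  have := ones_le_aux w n
  simp only [zeros]
  omega

/-- The main construction: WAP with any rational frequency strictly between liminf and
limsup of the zero-frequency sequence. -/
lemma key_WAPwithZero (w : ℕ → Bool) (ρ : ℚ)
    (hr : liminf (fun n => (zeros w n : ℝ) / n) atTop < (ρ : ℝ))
    (hR : (ρ : ℝ) < limsup (fun n => (zeros w n : ℝ) / n) atTop) :
    WAPwithZero w ρ := by
  set s : ℕ → ℝ := fun n => (zeros w n : ℝ) / n with hs
  have hb0 : ∀ n, 0 ≤ s n := fun n => by positivity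
  have hb1 : ∀ n, s n ≤ 1 := by
    intro n
    rcases Nat.eq_zero_or_pos n with rfl | hn
    · simp [hs]
    · rw [hs]
      have : (zeros w n : ℝ) ≤ n := by
        exact_mod_cast Nat.cast_le.2 (Nat.sub_le n (ones w n))
      rw [div_le_one (by exact_mod_cast hn)]
      exact this
  have hBA : IsBoundedUnder (· ≤ ·) atTop s := isBoundedUnder_of ⟨1, fun n => hb1 n⟩
  have hBB : IsBoundedUnder (· ≥ ·) atTop s := isBoundedUnder_of ⟨0, fun n => hb0 n⟩
  -- ρ is positive
  have h0le : (0 : ℝ) ≤ liminf s atTop :=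
    le_liminf_of_le hBA.isCoboundedUnder_ge (Eventually.of_forall hb0)
  have hρpos : (0 : ℚ) < ρ := by exact_mod_cast h0le.trans_lt hr
  set p : ℤ := ρ.num with hp
  set q : ℕ := ρ.den with hq
  have hppos : 0 < p := Rat.num_pos.2 hρpos
  have hqpos : 0 < q := ρ.pos
  have hρeq : (ρ : ℝ) = (p : ℝ) / (q : ℝ) := by rw [Rat.cast_def]
  -- the integer sequence
  set g : ℕ → ℤ := fun n => (q : ℤ) * (zeros w n : ℤ) - p * n with hg
  have hgreal : ∀ n : ℕ, 1 ≤ n → (g n : ℝ) = (q : ℝ) * n * (s n - ρ) := by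
    intro n hn
    have hn' : (n : ℝ) ≠ 0 := by positivity
    rw [hg, hρeq, hs]
    push_cast
    field_simp
  -- step bound
  have hstep : ∀ n : ℕ, g (n + 1) ≤ g n + (q - p) := by
    intro n
    have h1 : (zeros w (n + 1) : ℤ) ≤ (zeros w n : ℤ) + 1 := by
      exact_mod_cast zeros_succ_le_aux w n
    have hq0 : (0 : ℤ) ≤ (q : ℤ) := by positivity
    rw [hg]
    push_cast
    nlinarith
  -- choose rationals strictly between
  obtain ⟨ρ', hρ'1, hρ'2⟩ := exists_rat_btwn hR
  obtain ⟨ρ'', hρ''1, hρ''2⟩ := exists_rat_btwn hr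
  have hfhi : ∃ᶠ n in atTop, (ρ' : ℝ) < s n :=
    frequently_lt_of_lt_limsup hBB.isCoboundedUnder_le hρ'2
  have hflo : ∃ᶠ n in atTop, s n < (ρ'' : ℝ) :=
    frequently_lt_of_liminf_lt hBA.isCoboundedUnder_ge hρ''1
  have hc : (0 : ℝ) < (ρ' : ℝ) - ρ := by linarith
  have hc' : (ρ'' : ℝ) - ρ < 0 := by linarith
  -- g is frequently large
  have Hhi : ∀ M : ℤ, ∀ N : ℕ, ∃ n, N ≤ n ∧ M ≤ g n := by
    intro M N
    set N₂ : ℕ := max (max N 1) (⌈(M : ℝ) / ((q : ℝ) * ((ρ' : ℝ) - ρ))⌉₊ + 1) with hN₂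
    obtain ⟨n, hn1, hn2⟩ := (frequently_atTop.1 hfhi) N₂
    refine ⟨n, le_trans (le_trans (le_max_left _ _) (le_max_left _ _)) hn1, ?_⟩
    have hn1' : 1 ≤ n := le_trans (le_trans (le_max_right _ _) (le_max_left _ _)) hn1
    have hnn : (⌈(M : ℝ) / ((q : ℝ) * ((ρ' : ℝ) - ρ))⌉₊ : ℝ) + 1 ≤ (n : ℝ) := by
      have : ⌈(M : ℝ) / ((q : ℝ) * ((ρ' : ℝ) - ρ))⌉₊ + 1 ≤ n :=
        le_trans (le_max_right _ _) hn1
      exact_mod_cast this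
    have hceil : (M : ℝ) / ((q : ℝ) * ((ρ' : ℝ) - ρ)) ≤
        (⌈(M : ℝ) / ((q : ℝ) * ((ρ' : ℝ) - ρ))⌉₊ : ℝ) := Nat.le_ceil _
    have hqc : (0 : ℝ) < (q : ℝ) * ((ρ' : ℝ) - ρ) := by positivity
    have hMn : (M : ℝ) ≤ (q : ℝ) * n * ((ρ' : ℝ) - ρ) := by
      rw [div_le_iff₀ hqc] at hceil
      nlinarith
    have : (M : ℝ) ≤ (g n : ℝ) := by
      rw [hgreal n hn1']
      have hqn : (0 : ℝ) ≤ (q : ℝ) * n := by positivity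
      nlinarith [hn2]
    exact_mod_cast this
  -- g is frequently negative
  have Hlo : ∀ N : ℕ, ∃ n, N ≤ n ∧ g n < 0 := by
    intro N
    obtain ⟨n, hn1, hn2⟩ := (frequently_atTop.1 hflo) (max N 1)
    refine ⟨n, le_trans (le_max_left _ _) hn1, ?_⟩
    have hn1' : 1 ≤ n := le_trans (le_max_right _ _) hn1
    have : (g n : ℝ) < 0 := by
      rw [hgreal n hn1']
      have hqn : (0 : ℝ) < (q : ℝ) * n := by
        have : (1 : ℝ) ≤ (n : ℝ) := by exact_mod_cast hn1'
        positivity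
      nlinarith [hn2]
    exact_mod_cast this
  -- crossing: frequently 0 ≤ g n < q
  have Hmid : ∀ N : ℕ, ∃ n, N ≤ n ∧ 0 ≤ g n ∧ g n < q := by
    intro N
    obtain ⟨n₁, hn₁N, hn₁⟩ := Hlo N
    obtain ⟨n₂, hn₂1, hn₂⟩ := Hhi q n₁
    have hP : ∃ m : ℕ, 0 ≤ g (n₁ + m) := by
      refine ⟨n₂ - n₁, ?_⟩
      rw [Nat.add_sub_cancel' hn₂1]
      exact le_trans (by exact_mod_cast Nat.zero_le q) hn₂
    classical
    set m₀ := Nat.find hP with hm₀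
    have hgm₀ : 0 ≤ g (n₁ + m₀) := Nat.find_spec hP
    have hm₀pos : 0 < m₀ := by
      rcases Nat.eq_zero_or_pos m₀ with h0 | h0
      · exfalso; rw [h0] at hgm₀; simp at hgm₀; omega
      · exact h0
    have hprev : g (n₁ + (m₀ - 1)) < 0 := by
      by_contra hcon
      push_neg at hcon
      have hfind := Nat.find_min' hP hcon
      omega
    refine ⟨n₁ + m₀, by omega, hgm₀, ?_⟩
    have := hstep (n₁ + (m₀ - 1))
    have heq : n₁ + (m₀ - 1) + 1 = n₁ + m₀ := by omega
    rw [heq] at this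
    omega
  -- the set of good indices is infinite
  have hTinf : {n : ℕ | 0 ≤ g n ∧ g n < q}.Infinite := by
    apply Set.infinite_of_not_bddAbove
    rintro ⟨b, hb⟩
    obtain ⟨n, hn1, hn2⟩ := Hmid (b + 1)
    have := hb (Set.mem_setOf.2 hn2)
    omega
  -- pigeonhole: some value v is attained infinitely often
  have hv : ∃ v : ℤ, {n : ℕ | g n = v}.Infinite := by
    by_contra hcon
    push_neg at hcon
    apply hTinf
    have hsub : {n : ℕ | 0 ≤ g n ∧ g n < q} ⊆
        ⋃ v ∈ Finset.Icc (0 : ℤ) ((q : ℤ) - 1), {n : ℕ | g n = v} := by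
      intro n hn
      obtain ⟨hna, hnb⟩ := hn
      simp only [Set.mem_iUnion, Set.mem_setOf_eq]
      exact ⟨g n, by simp only [Finset.mem_Icc]; omega, rfl⟩
    exact Set.Finite.subset (Set.Finite.biUnion (Finset.Icc (0 : ℤ) ((q : ℤ) - 1)).finite_toSet
      (fun v _ => hcon v)) hsub
  obtain ⟨v, hvinf⟩ := hv
  have hvinf' : (setOf (fun n => g n = v)).Infinite := hvinf
  refine ⟨Nat.nth (fun n => g n = v), Nat.nth_strictMono hvinf', ?_⟩
  intro i
  have h1 : g (Nat.nth (fun n => g n = v) (i + 1)) = v := Nat.nth_mem_of_infinite hvinf' (i + 1)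
  have h2 : g (Nat.nth (fun n => g n = v) i) = v := Nat.nth_mem_of_infinite hvinf' i
  set a := Nat.nth (fun n => g n = v) i with ha
  set b := Nat.nth (fun n => g n = v) (i + 1) with hb
  have heq : (q : ℤ) * (zeros w b : ℤ) - p * b = (q : ℤ) * (zeros w a : ℤ) - p * a := by
    rw [show ((q : ℤ) * (zeros w b : ℤ) - p * b) = g b from rfl, h1, ← h2]
  have heq' : (q : ℚ) * (zeros w b : ℚ) - (p : ℚ) * b = (q : ℚ) * (zeros w a : ℚ) - (p : ℚ) * a := by
    exact_mod_cast heq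
  have hρq : (ρ : ℚ) = (p : ℚ) / (q : ℚ) := by
    rw [hp, hq]; exact (Rat.num_div_den ρ).symm
  have hqne : (q : ℚ) ≠ 0 := by positivity
  rw [hρq]
  field_simp
  linarith [heq']

/-- If a binary infinite word `w` does not have letter frequencies (the limit of
`|pref_n(w)|₀ / n` does not exist), then `w` is weakly abelian periodic;
moreover `w` is WAP with any rational frequency `ρ` of 0 strictly between the
liminf `r` and the limsup `R` of the sequence `|pref_n(w)|₀ / n`. -/
theorem no_frequency_imp_WAP (w : ℕ → Bool)
    (h : ¬ ∃ L : ℝ, Tendsto (fun n => (zeros w n : ℝ) / n) atTop (𝓝 L)) :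
    WAP w ∧
    ∀ ρ : ℚ, liminf (fun n => (zeros w n : ℝ) / n) atTop < (ρ : ℝ) →
      (ρ : ℝ) < limsup (fun n => (zeros w n : ℝ) / n) atTop →
      WAPwithZero w ρ := by
  set s : ℕ → ℝ := fun n => (zeros w n : ℝ) / n with hs
  have hb0 : ∀ n, 0 ≤ s n := fun n => by positivity
  have hb1 : ∀ n, s n ≤ 1 := by
    intro n
    rcases Nat.eq_zero_or_pos n with rfl | hn
    · simp [hs]
    · rw [hs]
      have : (zeros w n : ℝ) ≤ n := by
        exact_mod_cast Nat.cast_le.2 (Nat.sub_le n (ones w n))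
      rw [div_le_one (by exact_mod_cast hn)]
      exact this
  have hBA : IsBoundedUnder (· ≤ ·) atTop s := isBoundedUnder_of ⟨1, fun n => hb1 n⟩
  have hBB : IsBoundedUnder (· ≥ ·) atTop s := isBoundedUnder_of ⟨0, fun n => hb0 n⟩
  have hlt : liminf s atTop < limsup s atTop := by
    rcases lt_or_ge (liminf s atTop) (limsup s atTop) with h' | h'
    · exact h'
    · exfalso
      have hle : liminf s atTop ≤ limsup s atTop := liminf_le_limsup hBA hBB
      have heq : liminf s atTop = limsup s atTop := le_antisymm hle h'
      exact h ⟨limsup s atTop, tendsto_of_liminf_eq_limsup heq rfl hBA hBB⟩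
  constructor
  · obtain ⟨ρ, h1, h2⟩ := exists_rat_btwn hlt
    obtain ⟨k, hk, hkk⟩ := key_WAPwithZero w ρ h1 h2
    refine ⟨1 - ρ, k, hk, fun i => ?_⟩
    have honeq : ∀ n, (ones w n : ℚ) = (n : ℚ) - (zeros w n : ℚ) := by
      intro n
      have h' := zeros_cast_aux w n
      have h'' : (ones w n : ℤ) = (n : ℤ) - zeros w n := by omega
      exact_mod_cast h''
    rw [honeq, honeq]
    linear_combination -(hkk i)
  · intro ρ h1 h2
    exact key_WAPwithZero w ρ h1 h2
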